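/- Let A be a unital C*-algebra and x ∈ A. If there is a constant K ≥ 0 such that ‖1 + i t x‖² ≤ 1 + K t² for all real t, then x is selfadjoint. -/

import Mathlib

open StarAlgebra Complex

lemma aux_real {A : Type*} [CStarAlgebra A] (g : A →L[ℂ] ℂ) (hg : ‖g‖ ≤ 1)
    (hg1 : g 1 = 1) {a : A} (ha : IsSelfAdjoint a) : (g a).im = 0 := by
  have key : ∀ t : ℝ, 2 * (g a).im * t ≤ ‖a‖ ^ 2 := by
    intro t
    obtain ⟨w, hw⟩ : ∃ w : ℂ, w = (t : ℂ) * I := ⟨_, rfl⟩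
    have h1 : ‖g (a + w • 1)‖ ≤ ‖a + w • 1‖ := by
      calc ‖g (a + w • 1)‖ ≤ ‖g‖ * ‖a + w • 1‖ := g.le_opNorm _
        _ ≤ 1 * ‖a + w • 1‖ := by gcongr
        _ = _ := one_mul _
    have h2 : ‖a + w • 1‖ ^ 2 ≤ ‖a‖ ^ 2 + t ^ 2 := by
      have hcs := CStarRing.norm_star_mul_self (x := a + w • (1 : A))
      have hstar : star (a + w • (1 : A)) = a - w • 1 := by
        simp [ha.star_eq, sub_eq_add_neg, hw]
      have hprod : (a - w • (1 : A)) * (a + w • 1) = a * a + ((t : ℝ) ^ 2 : ℝ) • 1 := by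
        have hww : w * w = ((-(t^2) : ℝ) : ℂ) := by
          rw [hw, mul_mul_mul_comm, I_mul_I]; push_cast; ring
        simp only [sub_mul, mul_add, smul_mul_assoc, mul_smul_comm, one_mul, mul_one,
          smul_smul, hww]
        match_scalars <;> first | ring1 | linear_combination (norm := (push_cast; ring_nf; with_unfolding_all norm_num [Complex.ext_iff])) -hww
      rw [hstar, hprod] at hcs
      calc ‖a + w • 1‖ ^ 2 = ‖a * a + ((t:ℝ)^2 : ℝ) • (1:A)‖ := by
            rw [sq]; exact hcs.symm
        _ ≤ ‖a * a‖ + ‖((t:ℝ)^2 : ℝ) • (1:A)‖ := norm_add_le _ _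
        _ ≤ ‖a‖ * ‖a‖ + |(t:ℝ)^2| * ‖(1:A)‖ := by
            gcongr
            · exact norm_mul_le _ _
            · rw [norm_smul]; simp [Real.norm_eq_abs]
        _ ≤ ‖a‖ ^ 2 + t ^ 2 := by
            have h1le : ‖(1:A)‖ ≤ 1 := by
              have h11 := CStarRing.norm_star_mul_self (x := (1:A))
              simp only [star_one, one_mul] at h11
              nlinarith [norm_nonneg (1:A)]
            rw [_root_.abs_of_nonneg (sq_nonneg t)]
            nlinarith [sq_nonneg t]
    have hga : g (a + w • 1) = g a + w := by
      simp [map_add, map_smul, hg1, smul_eq_mul]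
    have h3 : ‖g a + w‖ ^ 2 ≤ ‖a‖ ^ 2 + t ^ 2 := by
      rw [← hga]
      calc ‖g (a + w • 1)‖ ^ 2 ≤ ‖a + w • 1‖ ^ 2 := by
            apply pow_le_pow_left₀ (norm_nonneg _) h1
        _ ≤ _ := h2
    have hnorm : ‖g a + w‖ ^ 2 = (g a).re ^ 2 + ((g a).im + t) ^ 2 := by
      rw [Complex.sq_norm, Complex.normSq_apply]
      simp [hw]
      ring
    nlinarith [sq_nonneg ((g a).re)]
  by_contra him
  rcases lt_or_gt_of_ne him with hlt | hgt
  all_goals {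
    have h0 := key ((‖a‖^2 + 1) / (2 * (g a).im))
    have he : 2 * (g a).im * ((‖a‖^2 + 1) / (2 * (g a).im)) = ‖a‖^2 + 1 := by
      field_simp
    rw [he] at h0
    linarith }

-- existence of a norm-one unital functional norming a selfadjoint element
lemma aux_norming {A : Type*} [CStarAlgebra A] [Nontrivial A] {c : A} (hc : IsSelfAdjoint c) :
    ∃ g : A →L[ℂ] ℂ, ‖g‖ ≤ 1 ∧ g 1 = 1 ∧ ‖g c‖ = ‖c‖ := by
  have hnormal : IsStarNormal c := hc.isStarNormal
  -- spectral radius equals norm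
  obtain ⟨μ, hμmem, hμ⟩ := spectrum.exists_nnnorm_eq_spectralRadius (a := c)
  rw [hc.spectralRadius_eq_nnnorm] at hμ
  have hμnn : ‖μ‖₊ = ‖c‖₊ := by exact_mod_cast hμ
  have hμnorm : ‖μ‖ = ‖c‖ := congrArg NNReal.toReal hμnn
  -- character on the elemental algebra hitting μ
  obtain ⟨φ, hφ⟩ := (StarAlgebra.elemental.bijective_characterSpaceToSpectrum c).2 ⟨μ, hμmem⟩
  have hφc : φ ⟨c, StarAlgebra.elemental.self_mem ℂ c⟩ = μ := congrArg Subtype.val hφ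
  -- view φ as a continuous linear functional on the underlying submodule
  set p : Submodule ℂ A := Subalgebra.toSubmodule (StarAlgebra.elemental ℂ c).toSubalgebra with hp
  have hmem : ∀ y : p, (y : A) ∈ StarAlgebra.elemental ℂ c := fun y => y.2
  let f₀ : p →ₗ[ℂ] ℂ :=
    { toFun := fun y => φ ⟨y.1, y.2⟩
      map_add' := by intro y z; rw [← map_add]; rfl
      map_smul' := by intro m y; rw [← map_smul]; rfl }
  have hbound : ∀ y : p, ‖f₀ y‖ ≤ 1 * ‖y‖ := by
    intro y
    rw [one_mul]
    exact NonUnitalStarAlgHom.norm_apply_le φ (⟨y.1, y.2⟩ : StarAlgebra.elemental ℂ c)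
  let f : p →L[ℂ] ℂ := f₀.mkContinuous 1 hbound
  obtain ⟨g, hgext, hgnorm⟩ := exists_extension_norm_eq p f
  refine ⟨g, ?_, ?_, ?_⟩
  · rw [hgnorm]
    exact f.opNorm_le_bound zero_le_one fun y => hbound y
  · have h1 : g (⟨1, (StarAlgebra.elemental ℂ c).one_mem⟩ : p) = f ⟨1, (StarAlgebra.elemental ℂ c).one_mem⟩ := hgext _
    simpa [f, f₀] using h1.trans (map_one φ)
  · have h2 : g (⟨c, StarAlgebra.elemental.self_mem ℂ c⟩ : p) =
        f ⟨c, StarAlgebra.elemental.self_mem ℂ c⟩ := hgext _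
    have : f ⟨c, StarAlgebra.elemental.self_mem ℂ c⟩ = μ := hφc
    rw [show g c = μ from by simpa [this] using h2, hμnorm]

/-- If `‖1 + i t x‖² ≤ 1 + K t²` for all real `t` (for some constant `K ≥ 0`),
then `x` is selfadjoint. -/
theorem stmt7 {A : Type*} [CStarAlgebra A] (x : A) (K : ℝ) (hK : 0 ≤ K)
    (h : ∀ t : ℝ, ‖(1 : A) + ((t : ℂ) * Complex.I) • x‖ ^ 2 ≤ 1 + K * t ^ 2) :
    IsSelfAdjoint x := by
  rcases subsingleton_or_nontrivial A with hA | hA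
  · exact isSelfAdjoint_iff.mpr (Subsingleton.elim _ _)
  set c : A := I • (x - star x) with hc
  have hcsa : IsSelfAdjoint c := by
    rw [IsSelfAdjoint, hc, star_smul, star_sub, star_star, Complex.star_def, Complex.conj_I,
      neg_smul, ← smul_neg, neg_sub]
  obtain ⟨g, hg, hg1, hgc⟩ := aux_norming hcsa
  -- Im (g x) = 0 from the hypothesis
  have hxim : (g x).im = 0 := by
    have key2 : ∀ t : ℝ, -2 * t * (g x).im ≤ K * t ^ 2 := by
      intro t
      have h1 : ‖g ((1:A) + ((t:ℂ) * I) • x)‖ ≤ ‖(1:A) + ((t:ℂ) * I) • x‖ := by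
        calc ‖g ((1:A) + ((t:ℂ) * I) • x)‖ ≤ ‖g‖ * ‖(1:A) + ((t:ℂ) * I) • x‖ := g.le_opNorm _
          _ ≤ 1 * _ := by gcongr
          _ = _ := one_mul _
      have hval : g ((1:A) + ((t:ℂ) * I) • x) = 1 + (t:ℂ) * I * g x := by
        simp [map_add, map_smul, hg1, smul_eq_mul]
      have hsq : ‖(1:ℂ) + (t:ℂ) * I * g x‖ ^ 2
          = (1 - t * (g x).im) ^ 2 + (t * (g x).re) ^ 2 := by
        rw [Complex.sq_norm, Complex.normSq_apply]
        simp
        ring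
      have h3 : (1 - t * (g x).im) ^ 2 + (t * (g x).re) ^ 2 ≤ 1 + K * t ^ 2 := by
        rw [← hsq, ← hval]
        calc ‖g ((1:A) + ((t:ℂ) * I) • x)‖ ^ 2 ≤ ‖(1:A) + ((t:ℂ) * I) • x‖ ^ 2 :=
              pow_le_pow_left₀ (norm_nonneg _) h1 2
          _ ≤ 1 + K * t ^ 2 := h t
      nlinarith [sq_nonneg (t * (g x).re), sq_nonneg (t * (g x).im)]
    by_contra him
    have hm2 : 0 < (g x).im ^ 2 := by positivity
    have hKp : (0:ℝ) < K + 1 := by linarith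
    have hk := key2 (-(g x).im / (K + 1))
    rw [div_pow, neg_pow] at hk
    have hne : (K + 1) ≠ 0 := ne_of_gt hKp
    field_simp at hk
    nlinarith [mul_pos hm2 hKp, mul_pos (mul_pos hm2 hKp) hKp]
  -- g is real on selfadjoints; apply to (x + x*)/2 and c
  have hasa : IsSelfAdjoint ((2⁻¹ : ℂ) • (x + star x)) := by
    have h1 : IsSelfAdjoint (x + star x) := by
      rw [isSelfAdjoint_iff, star_add, star_star, add_comm]
    exact IsSelfAdjoint.smul (show IsSelfAdjoint ((2:ℂ)⁻¹) by rw [isSelfAdjoint_iff]; simp) h1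
  have haim := aux_real g hg hg1 hasa
  have hcim := aux_real g hg hg1 hcsa
  have hgs : g ((2⁻¹ : ℂ) • (x + star x)) = (2⁻¹ : ℂ) * (g x + g (star x)) := by
    simp [map_add, map_smul, smul_eq_mul]
    ring
  have hgcval : g c = I * (g x - g (star x)) := by
    rw [hc]; simp [map_sub, map_smul, smul_eq_mul]
  set α := g x
  set β := g (star x)
  have hβim : β.im = 0 := by
    rw [hgs] at haim
    simp [Complex.mul_im, Complex.add_im, Complex.add_re] at haim
    nlinarith [haim, hxim]
  have hre : α.re - β.re = 0 := by
    rw [hgcval] at hcim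
    simp [Complex.mul_im, Complex.sub_re, Complex.sub_im] at hcim
    linarith
  have hgc0 : g c = 0 := by
    rw [hgcval]
    have : α - β = 0 := by
      apply Complex.ext <;> simp [Complex.sub_re, Complex.sub_im, hxim, hβim]
      linarith
    rw [this, mul_zero]
  have hc0 : c = 0 := by
    rw [← norm_eq_zero, ← hgc, hgc0, norm_zero]
  have hxs : x - star x = 0 := by
    have : ((-I) : ℂ) • c = x - star x := by
      rw [hc, smul_smul]
      simp [neg_mul, I_mul_I]
    rw [← this, hc0, smul_zero]
  exact isSelfAdjoint_iff.mpr (by rw [← sub_eq_zero, ← neg_sub, hxs, neg_zero])
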